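/- In Z^3, the capacity of the discrete line segment T_N = {0,1,...,N} × {0}^2 satisfies cap(T_N) ~ (π/3) · N / log N as N → ∞; that is, cap(T_N) · (log N)/N converges to π/3. -/

import Mathlib

/-!
STATEMENT 2: In ℤ³, with the Green function `G` of the simple random walk (translation
invariant, symmetric, bounded, nonnegative, with asymptotics
`G x · |x| → 3/(2π)` as `|x| → ∞`), and `e N` the equilibrium measure of the discrete
segment `T_N = {0,…,N} × {0}²` (taking values in `[0,1]`, supported on `T_N`, and
satisfying the last-exit identity `∑_{y∈T_N} G(x-y) e N y = 1` for `x ∈ T_N`), the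
capacity `cap(T_N) = ∑_{x∈T_N} e N x` satisfies `cap(T_N) · log N / N → π/3`.
-/

open scoped BigOperators

abbrev Zd (d : ℕ) := Fin d → ℤ

noncomputable def enorm3 (x : Zd 3) : ℝ := Real.sqrt (∑ i, ((x i : ℝ)) ^ 2)

def segN (N : ℕ) : Finset (Zd 3) :=
  (Finset.range (N + 1)).image (fun i : ℕ => fun j : Fin 3 => if (j : ℕ) = 0 then (i : ℤ) else 0)

section Aux
open Finset Filter

def ptz (m : ℤ) : Zd 3 := fun j : Fin 3 => if (j : ℕ) = 0 then m else 0

lemma ptz_neg (m : ℤ) : ptz (-m) = -(ptz m) := by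
  funext j
  by_cases h : (j : ℕ) = 0 <;> simp [ptz, h]

lemma ptz_sub (a b : ℤ) : ptz a - ptz b = ptz (a - b) := by
  funext j
  by_cases h : (j : ℕ) = 0 <;> simp [ptz, h]

lemma enorm3_ptz (m : ℤ) : enorm3 (ptz m) = |(m : ℝ)| := by
  rw [enorm3, Fin.sum_univ_three]
  have h0 : ((0 : Fin 3) : ℕ) = 0 := rfl
  have h1 : ((1 : Fin 3) : ℕ) = 1 := rfl
  have h2 : ((2 : Fin 3) : ℕ) = 2 := rfl
  simp only [ptz, h0, h1, h2]
  norm_num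
  exact Real.sqrt_sq_eq_abs _

lemma segN_eq (N : ℕ) : segN N = (Finset.range (N+1)).image (fun i : ℕ => ptz (i:ℤ)) := rfl

lemma natAbs_dist (i j : ℕ) : ((i:ℤ) - (j:ℤ)).natAbs = Nat.dist i j := by
  simp only [Nat.dist]
  omega


lemma harmLog1 (n : ℕ) : Real.log ((n:ℝ)+1) ≤ ∑ i ∈ Finset.range n, ((i:ℝ)+1)⁻¹ := by
  have h := log_add_one_le_harmonic n
  have : ((harmonic n : ℚ) : ℝ) = ∑ i ∈ Finset.range n, ((i:ℝ)+1)⁻¹ := by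
    rw [harmonic]
    push_cast
    exact Finset.sum_congr rfl fun i _ => by ring
  rw [this] at h
  refine le_trans (le_of_eq ?_) h
  push_cast
  ring_nf

lemma harmLog2 (n : ℕ) : ∑ i ∈ Finset.range n, ((i:ℝ)+1)⁻¹ ≤ 1 + Real.log n := by
  have h := harmonic_le_one_add_log n
  have : ((harmonic n : ℚ) : ℝ) = ∑ i ∈ Finset.range n, ((i:ℝ)+1)⁻¹ := by
    rw [harmonic]; push_cast
    exact Finset.sum_congr rfl fun i _ => by ring
  rw [this] at h
  exact h

set_option maxHeartbeats 4000000 in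
theorem capCore (c : ℝ) (hc : 0 < c) (g : ℕ → ℝ) (hg0 : ∀ k, 0 ≤ g k)
    (CG : ℝ) (hgbd : ∀ k, g k ≤ CG)
    (hgasym : ∀ ε : ℝ, 0 < ε → ∃ R : ℕ, 1 ≤ R ∧ ∀ k : ℕ, R ≤ k → |g k * k - c| ≤ ε)
    (f : ℕ → ℕ → ℝ) (hf0 : ∀ N j, 0 ≤ f N j) (hf1 : ∀ N j, f N j ≤ 1)
    (hid : ∀ N, ∀ i ≤ N, ∑ j ∈ Finset.range (N+1), g (Nat.dist i j) * f N j = 1) :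
    Filter.Tendsto (fun N : ℕ => (∑ j ∈ Finset.range (N+1), f N j) * Real.log N / N)
      Filter.atTop (nhds (1/(2*c))) := by
  classical
  set S : ℕ → ℝ := fun n => ∑ i ∈ Finset.range n, g (i+1) with hS
  set F : ℕ → ℝ := fun N => ∑ j ∈ Finset.range (N+1), f N j with hF
  -- basic facts
  have hSmono : Monotone S := by
    intro a b hab
    exact Finset.sum_le_sum_of_subset_of_nonneg (Finset.range_subset_range.2 hab)
      (fun i _ _ => hg0 _)
  have hS0 : ∀ n, 0 ≤ S n := fun n => Finset.sum_nonneg fun i _ => hg0 _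
  have hF0 : ∀ N, 0 ≤ F N := fun N => Finset.sum_nonneg fun j _ => hf0 _ _
  have hg00 : 0 ≤ g 0 := hg0 0
  set H : ℕ → ℝ := fun n => ∑ i ∈ Finset.range n, ((i:ℝ)+1)⁻¹ with hHdef
  have hH1 : ∀ n : ℕ, Real.log ((n:ℝ)+1) ≤ H n := harmLog1
  have hH2 : ∀ n : ℕ, H n ≤ 1 + Real.log n := harmLog2
  have hlogsucc : ∀ n : ℕ, Real.log n ≤ Real.log ((n:ℝ)+1) := by
    intro n
    rcases Nat.eq_zero_or_pos n with h | h
    · simp [h]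
    · apply Real.log_le_log (by positivity)
      linarith
  have hHIco : ∀ j n : ℕ, j ≤ n → ∑ i ∈ Finset.Ico j n, ((i:ℝ)+1)⁻¹ = H n - H j :=
    fun j n h => Finset.sum_Ico_eq_sub _ h
  have hSIco : ∀ j n : ℕ, j ≤ n → S n - S j = ∑ i ∈ Finset.Ico j n, g (i+1) :=
    fun j n h => by rw [Finset.sum_Ico_eq_sub _ h]
  -- eventual largeness helper
  have hev : ∀ A : ℝ, ∃ M : ℕ, ∀ N ≥ M, 2 ≤ N ∧ A ≤ Real.log N := by
    intro A
    have h1 : Filter.Tendsto (fun N : ℕ => Real.log N) Filter.atTop Filter.atTop :=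
      Real.tendsto_log_atTop.comp (tendsto_natCast_atTop_atTop)
    have h2 : ∀ᶠ N : ℕ in Filter.atTop, A ≤ Real.log N := h1.eventually_ge_atTop A
    have h3 : ∀ᶠ N : ℕ in Filter.atTop, 2 ≤ N := Filter.eventually_ge_atTop 2
    obtain ⟨M, hM⟩ := Filter.eventually_atTop.1 (h3.and h2)
    exact ⟨M, fun N hN => hM N hN⟩
  -- decomposition of the row sums
  have Hcomp : ∀ N j, j ≤ N →
      ∑ i ∈ Finset.range (N+1), g (Nat.dist i j) = g 0 + S j + S (N-j) := by
    intro N j hj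
    have hsplit : ∑ i ∈ Finset.Ico 0 (j+1), g (Nat.dist i j)
        + ∑ i ∈ Finset.Ico (j+1) (N+1), g (Nat.dist i j)
        = ∑ i ∈ Finset.Ico 0 (N+1), g (Nat.dist i j) :=
      Finset.sum_Ico_consecutive _ (Nat.zero_le _) (by omega)
    have h1 : ∑ i ∈ Finset.Ico 0 (j+1), g (Nat.dist i j) = g 0 + S j := by
      have e1 : ∑ i ∈ Finset.Ico 0 (j+1), g (Nat.dist i j)
          = ∑ i ∈ Finset.range (j+1), g (j - i) := by
        rw [← Finset.range_eq_Ico]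
        refine Finset.sum_congr rfl fun i hi => ?_
        have : i ≤ j := by simpa [Nat.lt_succ_iff] using hi
        rw [Nat.dist_eq_sub_of_le this]
      have e2 : ∑ i ∈ Finset.range (j+1), g (j - i) = ∑ i ∈ Finset.range (j+1), g i := by
        have := Finset.sum_range_reflect (fun i => g i) (j+1)
        simpa using this
      rw [e1, e2, Finset.sum_range_succ']
      simp [hS, add_comm]
    have h2 : ∑ i ∈ Finset.Ico (j+1) (N+1), g (Nat.dist i j) = S (N-j) := by
      rw [Finset.sum_Ico_eq_sum_range]
      have : N + 1 - (j+1) = N - j := by omega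
      rw [this]
      refine Finset.sum_congr rfl fun i _ => ?_
      have : Nat.dist (j+1+i) j = i + 1 := by
        rw [Nat.dist_eq_sub_of_le_right (by omega)]; omega
      rw [this]
    rw [← Finset.range_eq_Ico] at hsplit h1
    rw [← Finset.range_eq_Ico] at hsplit
    rw [← hsplit, h1, h2]
  -- summed identity
  have hIdent : ∀ N, ∑ j ∈ Finset.range (N+1), f N j * (g 0 + S j + S (N-j)) = (N:ℝ)+1 := by
    intro N
    have : ∑ j ∈ Finset.range (N+1), f N j * (g 0 + S j + S (N-j))
        = ∑ j ∈ Finset.range (N+1), ∑ i ∈ Finset.range (N+1), g (Nat.dist i j) * f N j := by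
      refine Finset.sum_congr rfl fun j hj => ?_
      rw [← Finset.sum_mul, Hcomp N j (by simpa [Nat.lt_succ_iff] using hj), mul_comm]
    rw [this, Finset.sum_comm]
    have : ∀ i ∈ Finset.range (N+1),
        ∑ j ∈ Finset.range (N+1), g (Nat.dist i j) * f N j = 1 := by
      intro i hi
      exact hid N i (by simpa [Nat.lt_succ_iff] using hi)
    rw [Finset.sum_congr rfl this]
    simp
  -- upper bound on partial sums of g
  have hSdgen : ∀ ε' : ℝ, 0 < ε' → ∃ B₀ : ℝ, 0 ≤ B₀ ∧ ∀ j n, j ≤ n →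
      S n - S j ≤ (c+ε')*(Real.log ((n:ℝ)+1) - Real.log ((j:ℝ)+1)) + B₀ := by
    intro ε' hε'
    obtain ⟨R, hR1, hR⟩ := hgasym ε' hε'
    set M := max CG 0 with hM
    have hM0 : 0 ≤ M := le_max_right _ _
    refine ⟨M * R + (c+ε'), by positivity, ?_⟩
    intro j n hjn
    have hterm : ∀ i : ℕ, g (i+1) ≤ (c+ε')*((i:ℝ)+1)⁻¹ + (if i+1 < R then M else 0) := by
      intro i
      by_cases h : i + 1 < R
      · have h1 : g (i+1) ≤ M := le_trans (hgbd _) (le_max_left _ _)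
        have h2 : (0:ℝ) ≤ (c+ε')*((i:ℝ)+1)⁻¹ := by positivity
        simp only [if_pos h]; linarith
      · push_neg at h
        have h1 := (abs_le.1 (hR (i+1) h)).2
        have h2 : ((i:ℝ)+1) > 0 := by positivity
        have h3 : (((i+1:ℕ)):ℝ) = (i:ℝ)+1 := by push_cast; ring
        rw [h3] at h1
        have h4 : g (i+1) ≤ (c+ε')*((i:ℝ)+1)⁻¹ := by
          rw [show ((c+ε')*((i:ℝ)+1)⁻¹) = (c+ε')/((i:ℝ)+1) by ring, le_div_iff₀ h2]
          nlinarith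
        simp only [if_neg (by omega : ¬ i+1 < R)]; linarith
    calc S n - S j = ∑ i ∈ Finset.Ico j n, g (i+1) := hSIco j n hjn
      _ ≤ ∑ i ∈ Finset.Ico j n, ((c+ε')*((i:ℝ)+1)⁻¹ + (if i+1 < R then M else 0)) :=
          Finset.sum_le_sum fun i _ => hterm i
      _ = (c+ε')*(H n - H j) + ∑ i ∈ Finset.Ico j n, (if i+1 < R then M else 0) := by
          rw [Finset.sum_add_distrib, ← Finset.mul_sum, hHIco j n hjn]
      _ ≤ (c+ε')*(H n - H j) + M * R := by
          have : ∑ i ∈ Finset.Ico j n, (if i+1 < R then M else 0)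
              = ∑ i ∈ (Finset.Ico j n).filter (fun i => i+1 < R), M :=
            (Finset.sum_filter _ _).symm
          rw [this, Finset.sum_const, nsmul_eq_mul]
          have hcard : ((Finset.Ico j n).filter (fun i => i+1 < R)).card ≤ R := by
            have hsub : ((Finset.Ico j n).filter (fun i => i+1 < R)) ⊆ Finset.range R := by
              intro x hx
              simp only [Finset.mem_filter] at hx
              exact Finset.mem_range.2 (by omega)
            calc _ ≤ (Finset.range R).card := Finset.card_le_card hsub
              _ = R := Finset.card_range R
          have hcM : (((Finset.Ico j n).filter (fun i => i+1 < R)).card : ℝ) * M ≤ M * (R:ℝ) := by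
            rw [mul_comm]
            apply mul_le_mul_of_nonneg_left _ hM0
            exact_mod_cast hcard
          linarith
      _ ≤ (c+ε')*(1 + Real.log ((n:ℝ)+1) - Real.log ((j:ℝ)+1)) + M * R := by
          have h1 : H n ≤ 1 + Real.log ((n:ℝ)+1) := le_trans (hH2 n) (by linarith [hlogsucc n])
          have h2 : Real.log ((j:ℝ)+1) ≤ H j := hH1 j
          have : H n - H j ≤ 1 + Real.log ((n:ℝ)+1) - Real.log ((j:ℝ)+1) := by linarith
          nlinarith [hc, hε']
      _ = (c+ε')*(Real.log ((n:ℝ)+1) - Real.log ((j:ℝ)+1)) + (M * R + (c+ε')) := by ring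
  have hSd2 : ∃ B₀ : ℝ, 0 ≤ B₀ ∧ ∀ j n, j ≤ n →
      S n - S j ≤ 2*c*(Real.log ((n:ℝ)+1) - Real.log ((j:ℝ)+1)) + B₀ := by
    obtain ⟨B₀, h1, h2⟩ := hSdgen c hc
    exact ⟨B₀, h1, fun j n h => by have := h2 j n h; nlinarith [this]⟩
  obtain ⟨B₀, hB₀0, hSd⟩ := hSd2
  -- lower bound on S
  have hSlowgen : ∀ ε' : ℝ, 0 < ε' → ε' < c →
      ∃ B₁ : ℝ, 0 ≤ B₁ ∧ ∀ n : ℕ, (c-ε') * Real.log ((n:ℝ)+1) - B₁ ≤ S n := by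
    intro ε' hε' hε'c
    have hcε : (0:ℝ) < c - ε' := by linarith
    obtain ⟨R, hR1, hR⟩ := hgasym ε' hε'
    have hlogR : (0:ℝ) ≤ Real.log ((R:ℝ)+1) := Real.log_nonneg (by push_cast; linarith)
    refine ⟨(c-ε') * (1 + Real.log ((R:ℝ)+1)), by positivity, ?_⟩
    intro n
    by_cases hn : n ≤ R
    · have h1 : Real.log ((n:ℝ)+1) ≤ Real.log ((R:ℝ)+1) := by
        apply Real.log_le_log (by positivity)
        have : (n:ℝ) ≤ R := by exact_mod_cast hn
        linarith
      have := hS0 n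
      nlinarith
    · push_neg at hn
      have hRn : R ≤ n := le_of_lt hn
      have hsub : S n ≥ ∑ i ∈ Finset.Ico R n, g (i+1) := by
        rw [hS]
        apply Finset.sum_le_sum_of_subset_of_nonneg
        · intro x hx
          simp only [Finset.mem_Ico] at hx
          exact Finset.mem_range.2 hx.2
        · exact fun i _ _ => hg0 _
      have hterm : ∀ i ∈ Finset.Ico R n, (c-ε')*((i:ℝ)+1)⁻¹ ≤ g (i+1) := by
        intro i hi
        simp only [Finset.mem_Ico] at hi
        have h1 := (abs_le.1 (hR (i+1) (by omega))).1
        have h2 : ((i:ℝ)+1) > 0 := by positivity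
        have h3 : (((i+1:ℕ)):ℝ) = (i:ℝ)+1 := by push_cast; ring
        rw [h3] at h1
        rw [show ((c-ε')*((i:ℝ)+1)⁻¹) = (c-ε')/((i:ℝ)+1) by ring, div_le_iff₀ h2]
        nlinarith
      have h4 : ∑ i ∈ Finset.Ico R n, (c-ε')*((i:ℝ)+1)⁻¹ ≤ ∑ i ∈ Finset.Ico R n, g (i+1) :=
        Finset.sum_le_sum hterm
      have h5 : ∑ i ∈ Finset.Ico R n, (c-ε')*((i:ℝ)+1)⁻¹ = (c-ε') * (H n - H R) := by
        rw [← Finset.mul_sum, hHIco R n hRn]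
      have h6 : H n - H R ≥ Real.log ((n:ℝ)+1) - (1 + Real.log ((R:ℝ)+1)) := by
        have := hH1 n
        have := hH2 R
        have := hlogsucc R
        linarith
      nlinarith
  have hSlow2 : ∃ B₁ : ℝ, 0 ≤ B₁ ∧ ∀ n : ℕ, c/2 * Real.log ((n:ℝ)+1) - B₁ ≤ S n := by
    obtain ⟨B₁, h1, h2⟩ := hSlowgen (c/2) (by positivity) (by linarith)
    refine ⟨B₁, h1, fun n => ?_⟩
    have := h2 n
    have : c - c/2 = c/2 := by ring
    linarith [h2 n]
  obtain ⟨B₁, hB₁0, hSlow⟩ := hSlow2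
  -- the A-bound
  have hAb : ∃ D : ℝ, 0 ≤ D ∧ ∀ N, ∀ i ≤ N,
      ∑ j ∈ Finset.range (N+1), f N j / ((Nat.dist i j : ℝ)+1) ≤ D := by
    obtain ⟨R, hR1, hR⟩ := hgasym (c/2) (by positivity)
    refine ⟨2/c + 2*R, by positivity, ?_⟩
    intro N i hi
    have hterm : ∀ j : ℕ, f N j / ((Nat.dist i j : ℝ)+1)
        ≤ (2/c) * (g (Nat.dist i j) * f N j) + (if Nat.dist i j < R then 1 else 0) := by
      intro j
      set d := Nat.dist i j with hd
      have hd0 : (0:ℝ) ≤ (d:ℝ) := Nat.cast_nonneg d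
      have hdpos : (0:ℝ) < (d:ℝ)+1 := by linarith
      by_cases h : d < R
      · have h1 : f N j / ((d:ℝ)+1) ≤ 1 := by
          rw [div_le_one hdpos]
          have := hf1 N j
          linarith
        have h2 : (0:ℝ) ≤ (2/c) * (g d * f N j) := by
          have := hg0 d; have := hf0 N j
          positivity
        simp only [if_pos h]; linarith
      · push_neg at h
        have h1 := (abs_le.1 (hR d h)).1
        have hd1 : (1:ℝ) ≤ (d:ℝ) := by exact_mod_cast le_trans hR1 h
        have hdp : (0:ℝ) < (d:ℝ) := by linarith
        have hg2 : g d ≥ (c/2) / ((d:ℝ)+1) := by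
          rw [ge_iff_le, div_le_iff₀ hdpos]
          have : g d * (d:ℝ) ≥ c/2 := by linarith
          nlinarith [hg0 d]
        have h2 : f N j / ((d:ℝ)+1) ≤ (2/c) * (g d * f N j) := by
          have hf := hf0 N j
          have hkey : 1/((d:ℝ)+1) ≤ (2/c) * g d := by
            rw [div_le_iff₀ hdpos]
            have h5 : c/2 ≤ g d * ((d:ℝ)+1) := by
              rw [ge_iff_le, div_le_iff₀ hdpos] at hg2
              linarith
            calc (1:ℝ) = (2/c) * (c/2) := by field_simp
              _ ≤ (2/c) * (g d * ((d:ℝ)+1)) := by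
                  apply mul_le_mul_of_nonneg_left h5 (by positivity)
              _ = (2/c) * g d * ((d:ℝ)+1) := by ring
          have hmul := mul_le_mul_of_nonneg_right hkey hf
          calc f N j / ((d:ℝ)+1) = 1/((d:ℝ)+1) * f N j := by ring
            _ ≤ ((2/c) * g d) * f N j := hmul
            _ = (2/c) * (g d * f N j) := by ring
        simp only [if_neg (by omega : ¬ d < R)]; linarith
    calc ∑ j ∈ Finset.range (N+1), f N j / ((Nat.dist i j : ℝ)+1)
        ≤ ∑ j ∈ Finset.range (N+1),
          ((2/c) * (g (Nat.dist i j) * f N j) + (if Nat.dist i j < R then 1 else 0)) :=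
          Finset.sum_le_sum fun j _ => hterm j
      _ = (2/c) * ∑ j ∈ Finset.range (N+1), g (Nat.dist i j) * f N j
          + ∑ j ∈ Finset.range (N+1), (if Nat.dist i j < R then (1:ℝ) else 0) := by
          rw [Finset.sum_add_distrib, ← Finset.mul_sum]
      _ ≤ 2/c + 2*R := by
          rw [hid N i hi, mul_one]
          have hcard : ∑ j ∈ Finset.range (N+1), (if Nat.dist i j < R then (1:ℝ) else 0)
              = (((Finset.range (N+1)).filter (fun j => Nat.dist i j < R)).card : ℝ) := by
            rw [← Finset.sum_filter, Finset.sum_const, nsmul_eq_mul, mul_one]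
          rw [hcard]
          have hsub : ((Finset.range (N+1)).filter (fun j => Nat.dist i j < R))
              ⊆ Finset.Ico (i+1-R) (i+R) := by
            intro x hx
            simp only [Finset.mem_filter, Finset.mem_range] at hx
            have := hx.2
            simp only [Nat.dist] at this
            exact Finset.mem_Ico.2 (by omega)
          have h5 : (((Finset.range (N+1)).filter (fun j => Nat.dist i j < R)).card) ≤ 2*R := by
            calc _ ≤ (Finset.Ico (i+1-R) (i+R)).card := Finset.card_le_card hsub
              _ = (i+R) - (i+1-R) := Nat.card_Ico _ _
              _ ≤ 2*R := by omega
          have : ((((Finset.range (N+1)).filter (fun j => Nat.dist i j < R)).card):ℝ) ≤ 2*(R:ℝ) := by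
            exact_mod_cast h5
          linarith
  obtain ⟨D, hD0, hAb⟩ := hAb
  -- crude capacity bound
  have hCrude : ∃ K : ℝ, 0 ≤ K ∧ ∃ N₁ : ℕ, ∀ N ≥ N₁, F N * Real.log N ≤ K * N := by
    refine ⟨8/c, by positivity, ?_⟩
    set B₂ := c/2 * Real.log 2 + B₁ with hB₂
    have hB₂0 : 0 ≤ B₂ := by
      have : (0:ℝ) ≤ Real.log 2 := Real.log_nonneg (by norm_num)
      positivity
    obtain ⟨N₁, hN₁⟩ := hev (4*B₂/c + 1)
    refine ⟨N₁, ?_⟩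
    intro N hN
    obtain ⟨hN2, hNlog⟩ := hN₁ N hN
    have hlogN : (1:ℝ) ≤ Real.log N := by
      have : 4*B₂/c ≥ 0 := by positivity
      linarith
    -- S (N/2) ≥ (c/4) log N
    have hhalf : (N:ℝ) ≤ 2*((N/2 : ℕ):ℝ)+1 := by
      have : N ≤ 2*(N/2)+1 := by omega
      exact_mod_cast this
    have hlog2 : Real.log ((N:ℝ)+1) - Real.log 2 ≤ Real.log (((N/2:ℕ):ℝ)+1) := by
      rw [← Real.log_div (by positivity) (by norm_num)]
      apply Real.log_le_log (by positivity)
      linarith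
    have hSh : c/4 * Real.log N ≤ S (N/2) := by
      have h1 := hSlow (N/2)
      have h2 : Real.log (N:ℝ) ≤ Real.log ((N:ℝ)+1) := hlogsucc N
      have h3 : c/2 * Real.log (((N/2:ℕ):ℝ)+1) - B₁ ≥ c/2 * (Real.log ((N:ℝ)+1) - Real.log 2) - B₁ := by
        have := mul_le_mul_of_nonneg_left hlog2 (le_of_lt (by positivity : (0:ℝ) < c/2))
        linarith
      have h4 : c/2 * (Real.log ((N:ℝ)+1) - Real.log 2) - B₁ = c/2 * Real.log ((N:ℝ)+1) - B₂ := by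
        rw [hB₂]; ring
      have h5 : c/4 * Real.log ((N:ℝ)+1) ≥ B₂ := by
        have : Real.log ((N:ℝ)+1) ≥ 4*B₂/c := by linarith
        calc c/4 * Real.log ((N:ℝ)+1) ≥ c/4 * (4*B₂/c) := by
              apply mul_le_mul_of_nonneg_left this (by positivity)
          _ = B₂ := by field_simp
      have h6 : c/2 * Real.log ((N:ℝ)+1) - B₂ ≥ c/4 * Real.log ((N:ℝ)+1) := by linarith
      have h7 : c/4 * Real.log ((N:ℝ)+1) ≥ c/4 * Real.log (N:ℝ) := by
        apply mul_le_mul_of_nonneg_left h2 (by positivity)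
      linarith
    -- per-term lower bound in the identity
    have hterm : ∀ j ∈ Finset.range (N+1), f N j * S (N/2) ≤ f N j * (g 0 + S j + S (N-j)) := by
      intro j hj
      have hjN : j ≤ N := by simpa [Nat.lt_succ_iff] using hj
      apply mul_le_mul_of_nonneg_left _ (hf0 N j)
      have hmax : N/2 ≤ max j (N-j) := by omega
      have : S (N/2) ≤ S (max j (N-j)) := hSmono hmax
      have h8 : S (max j (N-j)) ≤ S j + S (N-j) := by
        rcases max_cases j (N-j) with ⟨h,_⟩ | ⟨h,_⟩
        · rw [h]; linarith [hS0 (N-j)]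
        · rw [h]; linarith [hS0 j]
      linarith
    have hsum : F N * S (N/2) ≤ (N:ℝ)+1 := by
      calc F N * S (N/2) = ∑ j ∈ Finset.range (N+1), f N j * S (N/2) := by
            rw [hF, Finset.sum_mul]
        _ ≤ ∑ j ∈ Finset.range (N+1), f N j * (g 0 + S j + S (N-j)) :=
            Finset.sum_le_sum hterm
        _ = (N:ℝ)+1 := hIdent N
    have hSpos : 0 < S (N/2) := lt_of_lt_of_le (by nlinarith) hSh
    -- conclude
    have hN1R : (1:ℝ) ≤ N := by exact_mod_cast le_trans (by norm_num) hN2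
    have hFb : F N ≤ ((N:ℝ)+1) / (c/4 * Real.log N) := by
      rw [le_div_iff₀ (by nlinarith : (0:ℝ) < c/4 * Real.log (N:ℝ))]
      calc F N * (c/4 * Real.log N) ≤ F N * S (N/2) := by
            apply mul_le_mul_of_nonneg_left hSh (hF0 N)
        _ ≤ (N:ℝ)+1 := hsum
    calc F N * Real.log N ≤ (((N:ℝ)+1) / (c/4 * Real.log N)) * Real.log N := by
          apply mul_le_mul_of_nonneg_right hFb (by linarith : (0:ℝ) ≤ Real.log (N:ℝ))
      _ = ((N:ℝ)+1) * (4/c) := by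
          rw [div_mul_eq_mul_div, mul_comm]
          have hlogne : Real.log (N:ℝ) ≠ 0 := by linarith
          field_simp
      _ ≤ (2*(N:ℝ)) * (4/c) := by
          apply mul_le_mul_of_nonneg_right _ (by positivity)
          linarith
      _ = 8/c * N := by ring
  obtain ⟨K, hK0, N₁, hCrude⟩ := hCrude
  -- error bound
  have Ebound : ∀ ε : ℝ, 0 < ε → ∃ N₂ : ℕ, ∀ N ≥ N₂, ∀ w : ℕ → ℝ, (∀ j, 0 ≤ w j) →
      (∑ j ∈ Finset.range (N+1), w j / ((j:ℝ)+1) ≤ D) →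
      (∑ j ∈ Finset.range (N+1), w j ≤ F N) →
      ∑ j ∈ Finset.range (N+1), w j * (S N - S j) ≤ ε * N := by
    intro ε hε
    set A : ℝ := max (max 1 (12*c*D/ε)) (max ((24*Real.sqrt 2*c*K/ε)^2) (3*B₀*K/ε)) with hA
    obtain ⟨M, hM⟩ := hev A
    refine ⟨max M N₁, ?_⟩
    intro N hN w hw0 hwD hwF
    have hNM : N ≥ M := le_trans (le_max_left _ _) hN
    have hNN₁ : N ≥ N₁ := le_trans (le_max_right _ _) hN
    obtain ⟨hN2, hNA⟩ := hM N hNM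
    set L := Real.log (N:ℝ) with hLdef
    set T := Real.log ((N:ℝ)+1) with hTdef
    have hL1 : 1 ≤ L := le_trans (le_trans (le_max_left _ _) (le_max_left _ _)) hNA
    have hLD : 12*c*D/ε ≤ L := le_trans (le_trans (le_max_right _ _) (le_max_left _ _)) hNA
    have hLK : (24*Real.sqrt 2*c*K/ε)^2 ≤ L :=
      le_trans (le_trans (le_max_left _ _) (le_max_right _ _)) hNA
    have hLB : 3*B₀*K/ε ≤ L := le_trans (le_trans (le_max_right _ _) (le_max_right _ _)) hNA
    have hLT : L ≤ T := hlogsucc N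
    have hT1 : 1 ≤ T := le_trans hL1 hLT
    have hT0 : 0 < T := by linarith
    have hL0 : 0 < L := by linarith
    have hN2R : (2:ℝ) ≤ (N:ℝ) := by exact_mod_cast hN2
    have hT2L : T ≤ 2*L := by
      have h1 : ((N:ℝ)+1) ≤ (N:ℝ)^2 := by nlinarith
      have h2 : Real.log ((N:ℝ)+1) ≤ Real.log ((N:ℝ)^2) := Real.log_le_log (by linarith) h1
      rw [Real.log_pow] at h2
      push_cast at h2
      linarith
    set W := ∑ j ∈ Finset.range (N+1), w j with hW
    have hW0 : 0 ≤ W := Finset.sum_nonneg fun j _ => hw0 j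
    have hWK : W ≤ K * N / L := by
      rw [le_div_iff₀ hL0]
      calc W * L ≤ F N * L := mul_le_mul_of_nonneg_right hwF (by linarith)
        _ ≤ K * N := hCrude N hNN₁
    -- termwise bound from hSd
    have hstep1 : ∑ j ∈ Finset.range (N+1), w j * (S N - S j)
        ≤ 2*c*(∑ j ∈ Finset.range (N+1), w j * (T - Real.log ((j:ℝ)+1))) + B₀ * W := by
      have : ∀ j ∈ Finset.range (N+1), w j * (S N - S j)
          ≤ 2*c*(w j * (T - Real.log ((j:ℝ)+1))) + B₀ * w j := by
        intro j hj
        have hjN : j ≤ N := by simpa [Nat.lt_succ_iff] using hj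
        have h1 := hSd j N hjN
        have h2 := hw0 j
        nlinarith
      calc ∑ j ∈ Finset.range (N+1), w j * (S N - S j)
          ≤ ∑ j ∈ Finset.range (N+1), (2*c*(w j * (T - Real.log ((j:ℝ)+1))) + B₀ * w j) :=
            Finset.sum_le_sum this
        _ = 2*c*(∑ j ∈ Finset.range (N+1), w j * (T - Real.log ((j:ℝ)+1))) + B₀ * W := by
            rw [Finset.sum_add_distrib, ← Finset.mul_sum, ← Finset.mul_sum]
    -- split the middle sum
    set P : ℕ → Prop := fun j => ((j:ℝ)+1) * T^2 < (N:ℝ)+1 with hP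
    have hsplit2 : ∑ j ∈ Finset.range (N+1), w j * (T - Real.log ((j:ℝ)+1))
        ≤ ((N:ℝ)+1)/T * D + 2*Real.log T * W := by
      have hsf := Finset.sum_filter_add_sum_filter_not (Finset.range (N+1)) P
        (fun j => w j * (T - Real.log ((j:ℝ)+1)))
      have hbig : ∑ j ∈ (Finset.range (N+1)).filter P, w j * (T - Real.log ((j:ℝ)+1))
          ≤ ((N:ℝ)+1)/T * D := by
        have hterm : ∀ j ∈ (Finset.range (N+1)).filter P,
            w j * (T - Real.log ((j:ℝ)+1)) ≤ (w j / ((j:ℝ)+1)) * (((N:ℝ)+1)/T) := by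
          intro j hj
          have hPj : ((j:ℝ)+1) * T^2 < (N:ℝ)+1 := (Finset.mem_filter.1 hj).2
          have hj1 : (0:ℝ) < (j:ℝ)+1 := by positivity
          have hlj : 0 ≤ Real.log ((j:ℝ)+1) := Real.log_nonneg (by linarith)
          have h1 : w j * (T - Real.log ((j:ℝ)+1)) ≤ w j * T := by
            apply mul_le_mul_of_nonneg_left _ (hw0 j)
            linarith
          have h2 : w j = (w j / ((j:ℝ)+1)) * ((j:ℝ)+1) := by field_simp
          have h3 : (w j / ((j:ℝ)+1)) * ((j:ℝ)+1) * T ≤ (w j / ((j:ℝ)+1)) * (((N:ℝ)+1)/T) := by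
            rw [mul_assoc]
            apply mul_le_mul_of_nonneg_left _ (div_nonneg (hw0 j) (by positivity))
            rw [le_div_iff₀ hT0]
            calc ((j:ℝ)+1) * T * T = ((j:ℝ)+1) * T^2 := by ring
              _ ≤ (N:ℝ)+1 := le_of_lt hPj
          calc w j * (T - Real.log ((j:ℝ)+1)) ≤ w j * T := h1
            _ = (w j / ((j:ℝ)+1)) * ((j:ℝ)+1) * T := by rw [← h2]
            _ ≤ (w j / ((j:ℝ)+1)) * (((N:ℝ)+1)/T) := h3
        calc ∑ j ∈ (Finset.range (N+1)).filter P, w j * (T - Real.log ((j:ℝ)+1))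
            ≤ ∑ j ∈ (Finset.range (N+1)).filter P, (w j / ((j:ℝ)+1)) * (((N:ℝ)+1)/T) :=
              Finset.sum_le_sum hterm
          _ = (∑ j ∈ (Finset.range (N+1)).filter P, w j / ((j:ℝ)+1)) * (((N:ℝ)+1)/T) := by
              rw [Finset.sum_mul]
          _ ≤ D * (((N:ℝ)+1)/T) := by
              apply mul_le_mul_of_nonneg_right _ (div_nonneg (by positivity) hT0.le)
              calc ∑ j ∈ (Finset.range (N+1)).filter P, w j / ((j:ℝ)+1)
                  ≤ ∑ j ∈ Finset.range (N+1), w j / ((j:ℝ)+1) :=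
                    Finset.sum_le_sum_of_subset_of_nonneg (Finset.filter_subset _ _)
                      (fun j _ _ => div_nonneg (hw0 j) (by positivity))
                _ ≤ D := hwD
          _ = ((N:ℝ)+1)/T * D := mul_comm _ _
      have hsmall : ∑ j ∈ (Finset.range (N+1)).filter (fun j => ¬ P j),
          w j * (T - Real.log ((j:ℝ)+1)) ≤ 2*Real.log T * W := by
        have hterm : ∀ j ∈ (Finset.range (N+1)).filter (fun j => ¬ P j),
            w j * (T - Real.log ((j:ℝ)+1)) ≤ w j * (2*Real.log T) := by
          intro j hj
          have hPj : ¬ (((j:ℝ)+1) * T^2 < (N:ℝ)+1) := (Finset.mem_filter.1 hj).2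
          push_neg at hPj
          have hj1 : (0:ℝ) < (j:ℝ)+1 := by positivity
          apply mul_le_mul_of_nonneg_left _ (hw0 j)
          have h1 : ((N:ℝ)+1)/((j:ℝ)+1) ≤ T^2 := by
            rw [div_le_iff₀ hj1]
            linarith [hPj]
          have h2 : T - Real.log ((j:ℝ)+1) = Real.log (((N:ℝ)+1)/((j:ℝ)+1)) := by
            rw [Real.log_div (by positivity) (by positivity)]
          rw [h2]
          calc Real.log (((N:ℝ)+1)/((j:ℝ)+1)) ≤ Real.log (T^2) := by
                apply Real.log_le_log _ h1
                positivity
            _ = 2*Real.log T := by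
                rw [show T^2 = T*T by ring, Real.log_mul (ne_of_gt hT0) (ne_of_gt hT0)]
                ring
        calc ∑ j ∈ (Finset.range (N+1)).filter (fun j => ¬ P j),
            w j * (T - Real.log ((j:ℝ)+1))
            ≤ ∑ j ∈ (Finset.range (N+1)).filter (fun j => ¬ P j), w j * (2*Real.log T) :=
              Finset.sum_le_sum hterm
          _ = (∑ j ∈ (Finset.range (N+1)).filter (fun j => ¬ P j), w j) * (2*Real.log T) := by
              rw [Finset.sum_mul]
          _ ≤ W * (2*Real.log T) := by
              apply mul_le_mul_of_nonneg_right _ (by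
                have : (0:ℝ) ≤ Real.log T := Real.log_nonneg hT1
                linarith)
              exact Finset.sum_le_sum_of_subset_of_nonneg (Finset.filter_subset _ _)
                (fun j _ _ => hw0 j)
          _ = 2*Real.log T * W := by ring
      linarith [hsf, hbig, hsmall]
    -- three error terms
    have hNpos : (0:ℝ) < (N:ℝ) := by linarith
    have hWL : W * L ≤ K * N := by
      calc W * L ≤ F N * L := mul_le_mul_of_nonneg_right hwF hL0.le
        _ ≤ K * N := hCrude N hNN₁
    have hE1 : 2*c*(((N:ℝ)+1)/T * D) ≤ ε/3 * N := by
      have h2 : 12*c*D ≤ ε*L := by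
        rw [div_le_iff₀ hε] at hLD
        linarith
      have h4 : 4*c*D ≤ ε/3*T := by nlinarith
      rw [show 2*c*(((N:ℝ)+1)/T * D) = (2*c*D*((N:ℝ)+1))/T by ring, div_le_iff₀ hT0]
      have h5 : 2*c*D*((N:ℝ)+1) ≤ 4*c*D*(N:ℝ) := by nlinarith [mul_nonneg hc.le hD0]
      nlinarith [mul_le_mul_of_nonneg_right h4 hNpos.le]
    have hE2 : 2*c*(2*Real.log T * W) ≤ ε/3 * N := by
      set u := Real.sqrt L with hu
      have huu : u*u = L := Real.mul_self_sqrt hL0.le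
      have hu0 : 0 < u := Real.sqrt_pos.2 hL0
      have hlogT0 : 0 ≤ Real.log T := Real.log_nonneg hT1
      have hsT : Real.log T ≤ 2*Real.sqrt T := by
        have h1 : Real.log (Real.sqrt T) ≤ Real.sqrt T - 1 :=
          Real.log_le_sub_one_of_pos (Real.sqrt_pos.2 hT0)
        have h2 : Real.log (Real.sqrt T) = Real.log T / 2 := Real.log_sqrt hT0.le
        linarith
      have hsTu : Real.sqrt T ≤ Real.sqrt 2 * u := by
        have h1 : Real.sqrt T ≤ Real.sqrt (2*L) := Real.sqrt_le_sqrt hT2L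
        rwa [Real.sqrt_mul (by norm_num : (0:ℝ) ≤ 2)] at h1
      have hsLK : 24*Real.sqrt 2*c*K/ε ≤ u := by
        have h1 := Real.sqrt_le_sqrt hLK
        rwa [Real.sqrt_sq (by positivity)] at h1
      have h8 : 8*Real.sqrt 2*c*K ≤ ε/3 * u := by
        rw [div_le_iff₀ hε] at hsLK
        linarith
      have hlogTu : Real.log T ≤ 2*Real.sqrt 2*u := by linarith
      have hkey : (4*c*Real.log T) * (W*L) ≤ (4*c*(2*Real.sqrt 2*u))*(K*N) := by
        have h1 : Real.log T * (W*L) ≤ (2*Real.sqrt 2*u)*(K*N) := by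
          apply mul_le_mul hlogTu hWL (mul_nonneg hW0 hL0.le) (by positivity)
        have h2 := mul_le_mul_of_nonneg_left h1 (by positivity : (0:ℝ) ≤ 4*c)
        calc (4*c*Real.log T)*(W*L) = 4*c*(Real.log T*(W*L)) := by ring
          _ ≤ 4*c*((2*Real.sqrt 2*u)*(K*(N:ℝ))) := h2
          _ = (4*c*(2*Real.sqrt 2*u))*(K*(N:ℝ)) := by ring
      have hfin : (4*c*(2*Real.sqrt 2*u))*(K*(N:ℝ)) ≤ (ε/3 * N) * L := by
        have h1 := mul_le_mul_of_nonneg_right h8 (mul_nonneg hu0.le hNpos.le)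
        calc (4*c*(2*Real.sqrt 2*u))*(K*(N:ℝ)) = (8*Real.sqrt 2*c*K)*(u*(N:ℝ)) := by ring
          _ ≤ (ε/3*u)*(u*(N:ℝ)) := h1
          _ = ε/3*(u*u)*(N:ℝ) := by ring
          _ = (ε/3*(N:ℝ))*L := by rw [huu]; ring
      have hcomb : (4*c*Real.log T * W) * L ≤ (ε/3*N) * L := by
        calc (4*c*Real.log T * W)*L = (4*c*Real.log T)*(W*L) := by ring
          _ ≤ (4*c*(2*Real.sqrt 2*u))*(K*(N:ℝ)) := hkey
          _ ≤ (ε/3*(N:ℝ))*L := hfin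
      have hdiv : 4*c*Real.log T * W ≤ ε/3*N := le_of_mul_le_mul_right hcomb hL0
      calc 2*c*(2*Real.log T * W) = 4*c*Real.log T * W := by ring
        _ ≤ ε/3*N := hdiv
    have hE3 : B₀ * W ≤ ε/3 * N := by
      have h1 : B₀*W*L ≤ B₀*(K*(N:ℝ)) := by
        calc B₀*W*L = B₀*(W*L) := by ring
          _ ≤ B₀*(K*(N:ℝ)) := mul_le_mul_of_nonneg_left hWL hB₀0
      have h2 : 3*B₀*K ≤ ε*L := by
        rw [div_le_iff₀ hε] at hLB
        linarith
      have h3 : B₀*(K*(N:ℝ)) ≤ (ε/3*N)*L := by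
        have h4 := mul_le_mul_of_nonneg_right h2 hNpos.le
        nlinarith
      have h5 : (B₀*W)*L ≤ (ε/3*(N:ℝ))*L := by
        calc (B₀*W)*L = B₀*W*L := by ring
          _ ≤ B₀*(K*(N:ℝ)) := h1
          _ ≤ (ε/3*(N:ℝ))*L := h3
      exact le_of_mul_le_mul_right h5 hL0
    have hsplit2' := mul_le_mul_of_nonneg_left hsplit2 (by positivity : (0:ℝ) ≤ 2*c)
    rw [mul_add] at hsplit2'
    have hεN : ε/3*N + ε/3*N + ε/3*N = ε*N := by ring
    linarith [hstep1, hsplit2', hE1, hE2, hE3]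
  -- upper identity bound (termwise)
  have hup : ∀ N : ℕ, (N:ℝ)+1 ≤ F N * (g 0 + 2*S N) := by
    intro N
    rw [← hIdent N, hF]
    rw [Finset.sum_mul]
    apply Finset.sum_le_sum
    intro j hj
    have hjN : j ≤ N := by simpa [Nat.lt_succ_iff] using hj
    have h1 : S j ≤ S N := hSmono hjN
    have h2 : S (N-j) ≤ S N := hSmono (Nat.sub_le _ _)
    have := hf0 N j
    nlinarith
  have hS00 : S 0 = 0 := by simp [hS]
  -- final limit
  rw [Metric.tendsto_atTop]
  intro δ' hδ'
  set δ := δ'/2 with hδdef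
  have hδ : 0 < δ := by positivity
  set ε : ℝ := min (c/4) (min (c^2*δ/3) (c^2*δ/(3*(2*c+1)))) with hεdef
  have hε : 0 < ε := by
    apply lt_min (by positivity)
    exact lt_min (by positivity) (by positivity)
  have hεc4 : ε ≤ c/4 := min_le_left _ _
  have hε2 : ε ≤ c^2*δ/3 := le_trans (min_le_right _ _) (min_le_left _ _)
  have hε3 : ε ≤ c^2*δ/(3*(2*c+1)) := le_trans (min_le_right _ _) (min_le_right _ _)
  obtain ⟨B₂, hB₂0, hSdε⟩ := hSdgen ε hε
  obtain ⟨B₃, hB₃0, hSlowε⟩ := hSlowgen ε hε (by linarith)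
  obtain ⟨N₂, hN₂⟩ := Ebound ε hε
  set B₄ : ℝ := g 0 + 2*B₂ + 2*(c+ε)*Real.log 2 with hB₄
  have hB₄0 : 0 ≤ B₄ := by
    have : (0:ℝ) ≤ Real.log 2 := Real.log_nonneg (by norm_num)
    positivity
  set A : ℝ := max 1 (max (B₄/ε) (max (2*B₃/ε) (1/ε))) with hA
  obtain ⟨M, hM⟩ := hev A
  refine ⟨max M N₂, ?_⟩
  intro N hN
  have hNM : N ≥ M := le_trans (le_max_left _ _) hN
  have hNN₂ : N ≥ N₂ := le_trans (le_max_right _ _) hN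
  obtain ⟨hN2, hNA⟩ := hM N hNM
  set L := Real.log (N:ℝ) with hLdef
  have hL1 : 1 ≤ L := le_trans (le_max_left _ _) hNA
  have hL0 : 0 < L := by linarith
  have hLB₄ : B₄ ≤ ε*L := by
    have h1 : B₄/ε ≤ L := le_trans (le_trans (le_max_left _ _) (le_max_right _ _)) hNA
    rw [div_le_iff₀ hε] at h1
    linarith [mul_comm ε L]
  have hLB₃ : 2*B₃ ≤ ε*L := by
    have h1 : 2*B₃/ε ≤ L :=
      le_trans (le_trans (le_trans (le_max_left _ _) (le_max_right _ _)) (le_max_right _ _)) hNA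
    rw [div_le_iff₀ hε] at h1
    linarith [mul_comm ε L]
  have hLεN : 1 ≤ ε*(N:ℝ) := by
    have h1 : 1/ε ≤ L :=
      le_trans (le_trans (le_trans (le_max_right _ _) (le_max_right _ _)) (le_max_right _ _)) hNA
    rw [div_le_iff₀ hε] at h1
    have h2 : L ≤ (N:ℝ) := by
      have := Real.log_le_sub_one_of_pos (by positivity : (0:ℝ) < (N:ℝ))
      simp only [hLdef] at *
      linarith
    nlinarith
  have hN2R : (2:ℝ) ≤ (N:ℝ) := by exact_mod_cast hN2
  have hNpos : (0:ℝ) < (N:ℝ) := by linarith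
  -- bounds on Δ := g 0 + 2 S N
  have hΔup : g 0 + 2*S N ≤ (2*c+3*ε)*L := by
    have h1 := hSdε 0 N (Nat.zero_le N)
    rw [hS00] at h1
    have e0 : (((0:ℕ)):ℝ) + 1 = 1 := by norm_num
    rw [e0, Real.log_one] at h1
    have h2 : Real.log ((N:ℝ)+1) ≤ Real.log 2 + L := by
      have ha : ((N:ℝ)+1) ≤ 2*(N:ℝ) := by linarith
      have hb : Real.log ((N:ℝ)+1) ≤ Real.log (2*(N:ℝ)) := Real.log_le_log (by positivity) ha
      rwa [Real.log_mul (by norm_num) (by positivity)] at hb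
    have h3 : (c+ε)*Real.log ((N:ℝ)+1) ≤ (c+ε)*(Real.log 2 + L) :=
      mul_le_mul_of_nonneg_left h2 (by linarith)
    have h4 : S N ≤ (c+ε)*(Real.log 2 + L) + B₂ := by linarith [h1, h3]
    have h5 : g 0 + 2*S N ≤ (2*c+2*ε)*L + B₄ := by
      rw [hB₄]; linarith [h4]
    linarith [hLB₄]
  have hΔlow : (2*c-3*ε)*L ≤ g 0 + 2*S N := by
    have h1 := hSlowε N
    have h2 : L ≤ Real.log ((N:ℝ)+1) := hlogsucc N
    have h3 : (c-ε)*L ≤ (c-ε)*Real.log ((N:ℝ)+1) :=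
      mul_le_mul_of_nonneg_left h2 (by linarith [hεc4])
    linarith [hLB₃, hg00, h1, h3]
  have hεclow : (0:ℝ) < 2*c-3*ε := by linarith [hεc4]
  have hΔpos : 0 < g 0 + 2*S N := lt_of_lt_of_le (mul_pos hεclow hL0) hΔlow
  -- lower bound on F N * L / N
  have hlowF : 1/(2*c+3*ε) ≤ F N * L / N := by
    have h1 : (N:ℝ) ≤ F N * ((2*c+3*ε)*L) := by
      calc (N:ℝ) ≤ (N:ℝ)+1 := by linarith
        _ ≤ F N * (g 0 + 2*S N) := hup N
        _ ≤ F N * ((2*c+3*ε)*L) := mul_le_mul_of_nonneg_left hΔup (hF0 N)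
    have h2 : (0:ℝ) < 2*c+3*ε := by linarith
    rw [le_div_iff₀ hNpos, div_mul_eq_mul_div, one_mul, div_le_iff₀ h2]
    linarith [h1]
  -- decomposition and error bounds for the upper bound
  have hdecomp : F N * (g 0 + 2*S N) - ((N:ℝ)+1)
      = (∑ j ∈ Finset.range (N+1), f N j * (S N - S j))
        + (∑ j ∈ Finset.range (N+1), f N j * (S N - S (N-j))) := by
    rw [← hIdent N, hF, Finset.sum_mul, ← Finset.sum_add_distrib, ← Finset.sum_sub_distrib]
    apply Finset.sum_congr rfl
    intro j hj
    ring
  have hwD1 : ∑ j ∈ Finset.range (N+1), f N j / ((j:ℝ)+1) ≤ D := by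
    have h := hAb N 0 (Nat.zero_le N)
    have e : ∑ j ∈ Finset.range (N+1), f N j / ((Nat.dist 0 j:ℝ)+1)
        = ∑ j ∈ Finset.range (N+1), f N j / ((j:ℝ)+1) :=
      Finset.sum_congr rfl fun j _ => by rw [Nat.dist_zero_left]
    rwa [e] at h
  have hE1 : ∑ j ∈ Finset.range (N+1), f N j * (S N - S j) ≤ ε * N := by
    have := hN₂ N hNN₂ (fun j => f N j) (fun j => hf0 N j) hwD1 (le_of_eq (by rw [hF]))
    simpa using this
  have hrefl1 : ∑ j ∈ Finset.range (N+1), f N (N-j) * (S N - S j)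
      = ∑ j ∈ Finset.range (N+1), f N j * (S N - S (N-j)) := by
    rw [← Finset.sum_range_reflect (fun j => f N j * (S N - S (N-j))) (N+1)]
    apply Finset.sum_congr rfl
    intro j hj
    have hjN : j ≤ N := Nat.lt_succ_iff.1 (Finset.mem_range.1 hj)
    rw [show N + 1 - 1 - j = N - j from by omega, show N - (N - j) = j from by omega]
  have hwD2 : ∑ j ∈ Finset.range (N+1), f N (N-j) / ((j:ℝ)+1) ≤ D := by
    have h := hAb N N (le_refl N)
    have e : ∑ j ∈ Finset.range (N+1), f N (N-j) / ((j:ℝ)+1)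
        = ∑ j ∈ Finset.range (N+1), f N j / ((Nat.dist N j:ℝ)+1) := by
      rw [← Finset.sum_range_reflect (fun j => f N j / ((Nat.dist N j:ℝ)+1)) (N+1)]
      apply Finset.sum_congr rfl
      intro j hj
      have hjN : j ≤ N := Nat.lt_succ_iff.1 (Finset.mem_range.1 hj)
      rw [show N + 1 - 1 - j = N - j from by omega]
      have hdist : Nat.dist N (N-j) = j := by
        rw [Nat.dist_eq_sub_of_le_right (Nat.sub_le N j)]
        omega
      rw [hdist]
    rw [e]
    exact h
  have hwF2 : ∑ j ∈ Finset.range (N+1), f N (N-j) ≤ F N := by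
    have e := Finset.sum_range_reflect (fun j => f N j) (N+1)
    simp only [Nat.add_sub_cancel] at e
    rw [hF]
    exact le_of_eq e
  have hE2 : ∑ j ∈ Finset.range (N+1), f N j * (S N - S (N-j)) ≤ ε * N := by
    have := hN₂ N hNN₂ (fun j => f N (N-j)) (fun j => hf0 N _) hwD2 hwF2
    rw [← hrefl1]
    simpa using this
  have hdown : F N * (g 0 + 2*S N) ≤ (N:ℝ)+1+2*ε*N := by linarith [hdecomp, hE1, hE2]
  -- upper bound on F N * L / N
  have hhighF : F N * L / N ≤ (1+3*ε)/(2*c-3*ε) := by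
    have h1 : F N * ((2*c-3*ε)*L) ≤ (1+3*ε)*N := by
      calc F N * ((2*c-3*ε)*L) ≤ F N * (g 0 + 2*S N) :=
            mul_le_mul_of_nonneg_left hΔlow (hF0 N)
        _ ≤ (N:ℝ)+1+2*ε*N := hdown
        _ ≤ (1+3*ε)*N := by linarith [hLεN]
    rw [div_le_div_iff₀ hNpos hεclow]
    linarith [h1]
  -- distance estimates
  rw [le_div_iff₀ (by norm_num : (0:ℝ) < 3)] at hε2
  rw [le_div_iff₀ (by positivity : (0:ℝ) < 3*(2*c+1))] at hε3
  have h2c : (0:ℝ) < 2*c := by linarith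
  have h2c3 : (0:ℝ) < 2*c+3*ε := by linarith
  have hd1 : 1/(2*c) - 1/(2*c+3*ε) ≤ δ := by
    rw [div_sub_div _ _ (ne_of_gt h2c) (ne_of_gt h2c3), div_le_iff₀ (mul_pos h2c h2c3)]
    linarith [hε2, mul_nonneg (mul_nonneg hc.le hε.le) hδ.le,
      mul_nonneg (mul_nonneg hc.le hc.le) hδ.le]
  have hd2 : (1+3*ε)/(2*c-3*ε) - 1/(2*c) ≤ δ := by
    rw [div_sub_div _ _ (ne_of_gt hεclow) (ne_of_gt h2c), div_le_iff₀ (mul_pos hεclow h2c)]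
    have hεc2 : ε ≤ c/2 := by linarith [hεc4]
    linarith [hε3, mul_nonneg (mul_nonneg hc.le hε.le) hδ.le,
      mul_nonneg (mul_nonneg hc.le hc.le) hδ.le,
      mul_le_mul_of_nonneg_right hεc2 (mul_nonneg hc.le hδ.le)]
  rw [Real.dist_eq]
  have habs : |F N * L / (N:ℝ) - 1/(2*c)| ≤ δ :=
    abs_le.2 ⟨by linarith [hlowF, hd1], by linarith [hhighF, hd2]⟩
  have : δ < δ' := by rw [hδdef]; linarith
  exact lt_of_le_of_lt habs this

end Aux

theorem stmt2 (G : Zd 3 → ℝ) (hG0 : ∀ x, 0 ≤ G x) (hGsym : ∀ x, G (-x) = G x)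
    (CG : ℝ) (hGbd : ∀ x, G x ≤ CG)
    (hGasym : ∀ ε : ℝ, 0 < ε → ∃ R : ℝ, ∀ x : Zd 3, R ≤ enorm3 x →
      |G x * enorm3 x - 3 / (2 * Real.pi)| ≤ ε)
    (e : ℕ → Zd 3 → ℝ) (he0 : ∀ N x, 0 ≤ e N x) (he1 : ∀ N x, e N x ≤ 1)
    (hes : ∀ N x, x ∉ segN N → e N x = 0)
    (hlast : ∀ N, ∀ x ∈ segN N, ∑ y ∈ segN N, G (x - y) * e N y = 1) :
    Filter.Tendsto (fun N : ℕ => (∑ x ∈ segN N, e N x) * Real.log N / N)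
      Filter.atTop (nhds (Real.pi / 3)) := by
  have hπ : (0:ℝ) < Real.pi := Real.pi_pos
  set c : ℝ := 3 / (2 * Real.pi) with hcdef
  have hc : 0 < c := by positivity
  set g : ℕ → ℝ := fun k => G (ptz (k:ℤ)) with hgdef
  set f : ℕ → ℕ → ℝ := fun N j => e N (ptz (j:ℤ)) with hfdef
  have hGabs : ∀ m : ℤ, G (ptz m) = g m.natAbs := by
    intro m
    rcases le_or_gt 0 m with h | h
    · rw [hgdef]
      simp only
      rw [Int.natAbs_of_nonneg h]
    · have h1 : (m.natAbs : ℤ) = -m := Int.ofNat_natAbs_of_nonpos (le_of_lt h)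
      rw [hgdef]
      simp only
      rw [h1, ptz_neg, hGsym]
  have hinj : ∀ (s : Finset ℕ), ∀ x ∈ s, ∀ y ∈ s,
      (fun i : ℕ => ptz (i:ℤ)) x = (fun i : ℕ => ptz (i:ℤ)) y → x = y := by
    intro s x _ y _ hxy
    have := congrFun hxy ⟨0, by norm_num⟩
    simp only [ptz] at this
    exact_mod_cast this
  have hsumN : ∀ N, ∑ x ∈ segN N, e N x = ∑ j ∈ Finset.range (N+1), f N j := by
    intro N
    rw [segN_eq, Finset.sum_image (hinj _)]
  -- g hypotheses
  have hg0 : ∀ k, 0 ≤ g k := fun k => hG0 _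
  have hgbd : ∀ k, g k ≤ CG := fun k => hGbd _
  have hgasym : ∀ ε : ℝ, 0 < ε → ∃ R : ℕ, 1 ≤ R ∧ ∀ k : ℕ, R ≤ k → |g k * k - c| ≤ ε := by
    intro ε hε
    obtain ⟨R₀, hR₀⟩ := hGasym ε hε
    refine ⟨max 1 ⌈R₀⌉₊, le_max_left _ _, ?_⟩
    intro k hk
    have hk1 : 1 ≤ k := le_trans (le_max_left _ _) hk
    have hkR : ⌈R₀⌉₊ ≤ k := le_trans (le_max_right _ _) hk
    have h1 : R₀ ≤ enorm3 (ptz (k:ℤ)) := by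
      rw [enorm3_ptz]
      have h2 : |((k:ℤ):ℝ)| = (k:ℝ) := by
        push_cast
        exact abs_of_nonneg (by positivity)
      rw [h2]
      calc R₀ ≤ (⌈R₀⌉₊ : ℝ) := Nat.le_ceil R₀
        _ ≤ (k : ℝ) := by exact_mod_cast hkR
    have h3 := hR₀ (ptz (k:ℤ)) h1
    rw [enorm3_ptz] at h3
    have h2 : |((k:ℤ):ℝ)| = (k:ℝ) := by
      push_cast
      exact abs_of_nonneg (by positivity)
    rw [h2] at h3
    exact h3
  have hf0 : ∀ N j, 0 ≤ f N j := fun N j => he0 _ _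
  have hf1 : ∀ N j, f N j ≤ 1 := fun N j => he1 _ _
  have hid : ∀ N, ∀ i ≤ N, ∑ j ∈ Finset.range (N+1), g (Nat.dist i j) * f N j = 1 := by
    intro N i hi
    have hmem : ptz (i:ℤ) ∈ segN N := by
      rw [segN_eq]
      exact Finset.mem_image_of_mem _ (Finset.mem_range.2 (by omega))
    have h1 := hlast N (ptz (i:ℤ)) hmem
    rw [segN_eq, Finset.sum_image (hinj _)] at h1
    rw [← h1]
    apply Finset.sum_congr rfl
    intro j hj
    congr 1
    rw [ptz_sub, hGabs, natAbs_dist]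
  have hmain := capCore c hc g hg0 CG hgbd hgasym f hf0 hf1 hid
  have hfun : (fun N : ℕ => (∑ x ∈ segN N, e N x) * Real.log N / N)
      = (fun N : ℕ => (∑ j ∈ Finset.range (N+1), f N j) * Real.log N / N) :=
    funext fun N => by rw [hsumN N]
  have hval : Real.pi / 3 = 1/(2*c) := by
    rw [hcdef]
    field_simp
  rw [hfun, hval]
  exact hmain
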